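/- Let A ∈ ℝ^{n×n}, B = e_{i₀} ∈ ℝⁿ, σ_w² ≥ 0, and let μ be a sensor placement with nonempty support such that (A, C(μ)) is detectable and (A, Bσ_w) is stabilizable. Suppose every sensor node j ∈ supp(μ) satisfies distance l_{i₀ j} ≥ ζ in G(A) with equality for at least one j, and (A^{l_{i₀ j}})_{j i₀} ≠ 0 for all j reachable from i₀. Then the matrix Σ = σ_w² Σ_{m=0}^{ζ} A^m B Bᵀ (Aᵀ)^m satisfies the discrete algebraic Riccati equation Σ = AΣAᵀ + σ_w² BBᵀ − AΣC(μ)ᵀ (C(μ)ΣC(μ)ᵀ)† C(μ)ΣAᵀ, where (·)† is the Moore–Penrose pseudo-inverse. -/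
import Mathlib


open Matrix BigOperators

/-- The four Penrose conditions characterizing the Moore–Penrose pseudo-inverse. -/
def IsMoorePenrose {α β : Type*} [Fintype α] [Fintype β]
    (M : Matrix α β ℝ) (P : Matrix β α ℝ) : Prop :=
  M * P * M = M ∧ P * M * P = P ∧ (M * P)ᵀ = M * P ∧ (P * M)ᵀ = P * M
/-- There is a directed walk of length `m` from `i` to `j` in the graph `G(A)`,
where there is an edge from `u` to `v` iff `A v u ≠ 0`. -/
def hasWalk {n : ℕ} (A : Matrix (Fin n) (Fin n) ℝ) (i j : Fin n) (m : ℕ) : Prop :=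
  ∃ c : Fin (m + 1) → Fin n, c 0 = i ∧ c (Fin.last m) = j ∧
    ∀ k : Fin m, A (c k.succ) (c k.castSucc) ≠ 0

/-- `m` is the distance from `i` to `j` in the directed graph `G(A)`. -/
def IsGraphDist {n : ℕ} (A : Matrix (Fin n) (Fin n) ℝ) (i j : Fin n) (m : ℕ) : Prop :=
  hasWalk A i j m ∧ ∀ m' < m, ¬ hasWalk A i j m'
/-- The `i`-th standard basis vector of `ℝⁿ`, as a column matrix. -/
def eCol {n : ℕ} (i : Fin n) : Matrix (Fin n) (Fin 1) ℝ :=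
  Matrix.of fun r _ => if r = i then (1 : ℝ) else 0

/-- The measurement matrix `C(μ)` whose rows are `e_jᵀ` for `j` in the support `supp`. -/
def Cmat {n : ℕ} (supp : Finset (Fin n)) : Matrix {j // j ∈ supp} (Fin n) ℝ :=
  Matrix.of fun j k => if (j : Fin n) = k then (1 : ℝ) else 0

/-- PBH-type detectability of the pair `(A, C)`. -/
def Detectable {n : ℕ} {α : Type*} [Fintype α]
    (A : Matrix (Fin n) (Fin n) ℝ) (C : Matrix α (Fin n) ℝ) : Prop :=
  ∀ (μ : ℂ) (v : Fin n → ℂ), 1 ≤ ‖μ‖ →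
    (A.map (Complex.ofReal ·)).mulVec v = μ • v →
    (C.map (Complex.ofReal ·)).mulVec v = 0 → v = 0

/-- PBH-type stabilizability of the pair `(A, B)`. -/
def Stabilizable {n : ℕ} {α : Type*} [Fintype α]
    (A : Matrix (Fin n) (Fin n) ℝ) (B : Matrix (Fin n) α ℝ) : Prop :=
  ∀ (μ : ℂ) (v : Fin n → ℂ), 1 ≤ ‖μ‖ →
    Matrix.vecMul v (A.map (Complex.ofReal ·)) = μ • v →
    Matrix.vecMul v (B.map (Complex.ofReal ·)) = 0 → v = 0

/-- If the `(j,i)` entry of `A^m` is nonzero, there is a walk of length `m` from `i` to `j`. -/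
lemma hasWalk_of_pow_ne {n : ℕ} (A : Matrix (Fin n) (Fin n) ℝ) :
    ∀ (m : ℕ) (i j : Fin n), (A ^ m) j i ≠ 0 → hasWalk A i j m := by
  intro m
  induction m with
  | zero =>
    intro i j h
    have hji : j = i := by
      by_contra hne
      simp [Matrix.one_apply, hne] at h
    subst hji
    exact ⟨fun _ => j, rfl, rfl, fun k => k.elim0⟩
  | succ m ih =>
    intro i j h
    rw [pow_succ'] at h
    rw [Matrix.mul_apply] at h
    obtain ⟨k, _, hk⟩ := Finset.exists_ne_zero_of_sum_ne_zero h
    have h1 : A j k ≠ 0 := left_ne_zero_of_mul hk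
    have h2 : (A ^ m) k i ≠ 0 := right_ne_zero_of_mul hk
    obtain ⟨c, hc0, hcl, hce⟩ := ih i k h2
    refine ⟨Fin.snoc c j, ?_, ?_, ?_⟩
    · rw [show (0 : Fin (m + 1 + 1)) = Fin.castSucc 0 from rfl, Fin.snoc_castSucc]
      exact hc0
    · simp
    · intro t
      refine Fin.lastCases ?_ ?_ t
      · rw [Fin.succ_last, Fin.snoc_last, Fin.snoc_castSucc, hcl]
        exact h1
      · intro s
        rw [Fin.succ_castSucc, Fin.snoc_castSucc, Fin.snoc_castSucc]
        exact hce s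

lemma Cmat_mul_apply {n : ℕ} (supp : Finset (Fin n)) {α : Type*} [Fintype α]
    (X : Matrix (Fin n) α ℝ) (j : {j // j ∈ supp}) (k : α) :
    (Cmat supp * X) j k = X (j : Fin n) k := by
  simp [Cmat, Matrix.mul_apply]

lemma mul_eCol_apply {n : ℕ} (i₀ : Fin n) {α : Type*} [Fintype α]
    (X : Matrix α (Fin n) ℝ) (r : α) (c : Fin 1) :
    (X * eCol i₀) r c = X r i₀ := by
  simp [eCol, Matrix.mul_apply]

lemma sandwich {n : ℕ} {α β : Type*} [Fintype α] [Fintype β]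
    (ζ : ℕ) (w : ℕ → Matrix (Fin n) (Fin 1) ℝ) (σ : ℝ)
    (X : Matrix α (Fin n) ℝ) (Y : Matrix β (Fin n) ℝ)
    (hzero : ∀ m < ζ, X * w m = 0 ∨ Y * w m = 0) :
    X * (σ • ∑ m ∈ Finset.range (ζ + 1), w m * (w m)ᵀ) * Yᵀ
      = σ • ((X * w ζ) * (Y * w ζ)ᵀ) := by
  rw [Matrix.mul_smul, Matrix.smul_mul]
  congr 1
  rw [Matrix.mul_sum, Matrix.sum_mul, Finset.sum_range_succ]
  have hterm : ∀ m, X * (w m * (w m)ᵀ) * Yᵀ = (X * w m) * (Y * w m)ᵀ := by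
    intro m
    rw [Matrix.transpose_mul, ← Matrix.mul_assoc, ← Matrix.mul_assoc]
  rw [hterm]
  have : ∑ m ∈ Finset.range ζ, X * (w m * (w m)ᵀ) * Yᵀ = 0 := by
    refine Finset.sum_eq_zero fun m hm => ?_
    rw [hterm]
    rcases hzero m (Finset.mem_range.mp hm) with h | h
    · rw [h, Matrix.zero_mul]
    · rw [h, Matrix.transpose_zero, Matrix.mul_zero]
  rw [this, zero_add]

lemma mid_scalar {α β γ : Type*} [Fintype α] [Fintype β] [Fintype γ]
    (x : Matrix α (Fin 1) ℝ) (u : Matrix β (Fin 1) ℝ) (y : Matrix γ (Fin 1) ℝ)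
    (Q : Matrix β β ℝ) :
    x * uᵀ * Q * (u * yᵀ) = ((uᵀ * Q * u) 0 0) • (x * yᵀ) := by
  have h1 : uᵀ * Q * u = ((uᵀ * Q * u) 0 0) • (1 : Matrix (Fin 1) (Fin 1) ℝ) := by
    ext a b
    have ha : a = 0 := Subsingleton.elim a 0
    have hb : b = 0 := Subsingleton.elim b 0
    subst ha; subst hb
    simp [Matrix.one_apply]
  have h2 : x * uᵀ * Q * (u * yᵀ) = x * (uᵀ * Q * u) * yᵀ := by
    simp only [Matrix.mul_assoc]
  rw [h2]
  conv_lhs => rw [h1]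
  rw [Matrix.mul_smul, Matrix.smul_mul, Matrix.mul_one]

/-- The matrix `Σ = σ_w² Σ_{m=0}^{ζ} A^m B Bᵀ (Aᵀ)^m` (with `B = e_{i₀}`) satisfies the
discrete algebraic Riccati equation with zero measurement noise (pseudo-inverse version). -/
theorem stmt3 {n : ℕ} (A : Matrix (Fin n) (Fin n) ℝ) (i₀ : Fin n) (σw : ℝ) (hσw : 0 ≤ σw)
    (supp : Finset (Fin n)) (hsupp : supp.Nonempty)
    (hdet : Detectable A (Cmat supp))
    (hstab : Stabilizable A (σw • eCol i₀))
    (d : Fin n → ℕ) (hd : ∀ j, IsGraphDist A i₀ j (d j))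
    (hdnz : ∀ j, (A ^ d j) j i₀ ≠ 0)
    (ζ : ℕ) (hζle : ∀ j ∈ supp, ζ ≤ d j) (hζeq : ∃ j ∈ supp, d j = ζ)
    (S : Matrix (Fin n) (Fin n) ℝ)
    (hS : S = σw ^ 2 • ∑ m ∈ Finset.range (ζ + 1),
        A ^ m * eCol i₀ * (eCol i₀)ᵀ * Aᵀ ^ m)
    (P : Matrix {j // j ∈ supp} {j // j ∈ supp} ℝ)
    (hP : IsMoorePenrose (Cmat supp * S * (Cmat supp)ᵀ) P) :
    S = A * S * Aᵀ + σw ^ 2 • (eCol i₀ * (eCol i₀)ᵀ)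
      - A * S * (Cmat supp)ᵀ * P * Cmat supp * S * Aᵀ := by
  classical
  -- zero entries of powers below the graph distance
  have hpow0 : ∀ (m : ℕ) (j : Fin n), m < d j → (A ^ m) j i₀ = 0 := by
    intro m j hm
    by_contra h
    exact (hd j).2 m hm (hasWalk_of_pow_ne A m i₀ j h)
  have hCw : ∀ m < ζ, Cmat supp * (A ^ m * eCol i₀) = 0 := by
    intro m hm
    ext j k
    rw [← Matrix.mul_assoc, mul_eCol_apply, Cmat_mul_apply, Matrix.zero_apply]
    exact hpow0 m j (lt_of_lt_of_le hm (hζle j j.2))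
  -- S as a sum of rank-one matrices
  have hSsum : S = σw ^ 2 • ∑ m ∈ Finset.range (ζ + 1),
      (A ^ m * eCol i₀) * (A ^ m * eCol i₀)ᵀ := by
    rw [hS]
    congr 1
    refine Finset.sum_congr rfl fun m _ => ?_
    simp [Matrix.transpose_mul, Matrix.transpose_pow, Matrix.mul_assoc]
  set u : Matrix {j // j ∈ supp} (Fin 1) ℝ := Cmat supp * (A ^ ζ * eCol i₀) with hu
  set v : Matrix (Fin n) (Fin 1) ℝ := A ^ (ζ + 1) * eCol i₀ with hv
  have hAv : A * (A ^ ζ * eCol i₀) = v := by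
    rw [hv, ← Matrix.mul_assoc, ← pow_succ']
  -- the three sandwiched products
  have hCSC : Cmat supp * S * (Cmat supp)ᵀ = σw ^ 2 • (u * uᵀ) := by
    have := sandwich ζ (fun m => A ^ m * eCol i₀) (σw ^ 2) (Cmat supp) (Cmat supp)
      (fun m hm => Or.inl (hCw m hm))
    rw [← hSsum] at this
    exact this
  have hASC : A * S * (Cmat supp)ᵀ = σw ^ 2 • (v * uᵀ) := by
    have := sandwich ζ (fun m => A ^ m * eCol i₀) (σw ^ 2) A (Cmat supp)
      (fun m hm => Or.inr (hCw m hm))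
    rw [← hSsum, hAv] at this
    exact this
  have hCSA : Cmat supp * S * Aᵀ = σw ^ 2 • (u * vᵀ) := by
    have := sandwich ζ (fun m => A ^ m * eCol i₀) (σw ^ 2) (Cmat supp) A
      (fun m hm => Or.inl (hCw m hm))
    rw [← hSsum, hAv] at this
    exact this
  -- A S Aᵀ shifts the sum
  have hASA : A * S * Aᵀ = σw ^ 2 • ∑ m ∈ Finset.range (ζ + 1),
      (A ^ (m + 1) * eCol i₀) * (A ^ (m + 1) * eCol i₀)ᵀ := by
    rw [hSsum, Matrix.mul_smul, Matrix.smul_mul]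
    congr 1
    rw [Matrix.mul_sum, Matrix.sum_mul]
    refine Finset.sum_congr rfl fun m _ => ?_
    rw [pow_succ']
    simp [Matrix.transpose_mul, Matrix.mul_assoc]
  -- telescoping: A S Aᵀ + σ² B Bᵀ = S + σ² v vᵀ
  have hLHS : A * S * Aᵀ + σw ^ 2 • (eCol i₀ * (eCol i₀)ᵀ)
      = S + σw ^ 2 • (v * vᵀ) := by
    rw [hASA, ← smul_add]
    have hsum : (∑ m ∈ Finset.range (ζ + 1),
          (A ^ (m + 1) * eCol i₀) * (A ^ (m + 1) * eCol i₀)ᵀ) + eCol i₀ * (eCol i₀)ᵀ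
        = ∑ m ∈ Finset.range (ζ + 1 + 1),
          (A ^ m * eCol i₀) * (A ^ m * eCol i₀)ᵀ := by
      rw [Finset.sum_range_succ' (fun m => (A ^ m * eCol i₀) * (A ^ m * eCol i₀)ᵀ) (ζ + 1)]
      congr 1
      simp
    rw [hsum, Finset.sum_range_succ, smul_add, ← hSsum, hv]
  -- the scalar from the Penrose condition
  have key : (σw ^ 2 * σw ^ 2 * ((uᵀ * P * u) 0 0)) • (u * uᵀ) = σw ^ 2 • (u * uᵀ) := by
    have h := hP.1
    rw [hCSC, Matrix.smul_mul, Matrix.smul_mul, Matrix.mul_smul, smul_smul,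
      mid_scalar u u u P, smul_smul] at h
    exact h
  have hc : σw ^ 2 * σw ^ 2 * ((uᵀ * P * u) 0 0) = σw ^ 2 := by
    obtain ⟨j, hj, hdj⟩ := hζeq
    have huj : u ⟨j, hj⟩ 0 ≠ 0 := by
      rw [hu, ← Matrix.mul_assoc, mul_eCol_apply, Cmat_mul_apply, ← hdj]
      exact hdnz j
    have hne : (u * uᵀ) ⟨j, hj⟩ ⟨j, hj⟩ ≠ 0 := by
      rw [Matrix.mul_apply]
      rw [Fin.sum_univ_one]
      exact mul_ne_zero huj huj
    have hent := congrFun (congrFun key ⟨j, hj⟩) ⟨j, hj⟩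
    rw [Matrix.smul_apply, Matrix.smul_apply, smul_eq_mul, smul_eq_mul] at hent
    exact mul_right_cancel₀ hne hent
  -- the correction term
  have hcorr : A * S * (Cmat supp)ᵀ * P * Cmat supp * S * Aᵀ = σw ^ 2 • (v * vᵀ) := by
    calc A * S * (Cmat supp)ᵀ * P * Cmat supp * S * Aᵀ
        = (A * S * (Cmat supp)ᵀ) * P * ((Cmat supp * S) * Aᵀ) := by
          simp only [Matrix.mul_assoc]
      _ = (σw ^ 2 • (v * uᵀ)) * P * (σw ^ 2 • (u * vᵀ)) := by rw [hASC, hCSA]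
      _ = (σw ^ 2 * σw ^ 2) • (v * uᵀ * P * (u * vᵀ)) := by
          rw [Matrix.smul_mul, Matrix.smul_mul, Matrix.mul_smul, smul_smul]
      _ = (σw ^ 2 * σw ^ 2 * ((uᵀ * P * u) 0 0)) • (v * vᵀ) := by
          rw [mid_scalar v u v P, smul_smul]
      _ = σw ^ 2 • (v * vᵀ) := by rw [hc]
  rw [hcorr, hLHS, add_sub_cancel_right]
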